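/- Let D = ∂_x + d∂_y and D̄ = ∂_x + conj(d)∂_y, and let Q(x,y) = ½(Kx² + 2Lxy + My²) with K, L, M as in the mode conversion model (so that DQ = (1 + 1/μ)x, D̄Q = μy − x, DD̄Q = 1 + 1/μ). If F̃ is smooth and satisfies DD̄F̃ + (x/μ)D̄F̃ + μy·DF̃ = 0, then F = F̃·exp(Q) satisfies DD̄F + 2i·d_i·x·∂_y F − (1 + 1/μ + x(x+y))F = 0. -/

import Mathlib

open Complex

/-- Partial derivative in the first variable of a function of two real variables. -/
noncomputable def pdx (f : ℝ → ℝ → ℂ) (x y : ℝ) : ℂ := deriv (fun t => f t y) x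

/-- Partial derivative in the second variable of a function of two real variables. -/
noncomputable def pdy (f : ℝ → ℝ → ℂ) (x y : ℝ) : ℂ := deriv (fun t => f x t) y

/-- The operator `D g = (∂_x + d∂_y) g`. -/
noncomputable def Dop (d : ℂ) (f : ℝ → ℝ → ℂ) : ℝ → ℝ → ℂ :=
  fun x y => pdx f x y + d * pdy f x y

private lemma sliceX {g : ℝ × ℝ → ℂ} {a b : ℝ} (hg : DifferentiableAt ℝ g (a, b)) :
    HasDerivAt (fun t => g (t, b)) (fderiv ℝ g (a, b) (1, 0)) a := by
  have h1 : HasDerivAt (fun t : ℝ => ((t, b) : ℝ × ℝ)) ((1 : ℝ), (0 : ℝ)) a :=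
    (hasDerivAt_id a).prodMk (hasDerivAt_const a b)
  exact HasFDerivAt.comp_hasDerivAt (f := fun t : ℝ => ((t, b) : ℝ × ℝ)) a
    hg.hasFDerivAt h1

private lemma sliceY {g : ℝ × ℝ → ℂ} {a b : ℝ} (hg : DifferentiableAt ℝ g (a, b)) :
    HasDerivAt (fun t => g (a, t)) (fderiv ℝ g (a, b) (0, 1)) b := by
  have h1 : HasDerivAt (fun t : ℝ => ((a, t) : ℝ × ℝ)) ((0 : ℝ), (1 : ℝ)) b :=
    (hasDerivAt_const b a).prodMk (hasDerivAt_id b)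
  exact HasFDerivAt.comp_hasDerivAt (f := fun t : ℝ => ((a, t) : ℝ × ℝ)) b
    hg.hasFDerivAt h1

private lemma hasDerivAt_ofReal' (x : ℝ) : HasDerivAt (fun t : ℝ => (t : ℂ)) 1 x := by
  simpa using (hasDerivAt_id x).ofReal_comp

private lemma hasDerivAt_lin₁ (A B : ℂ) (x : ℝ) :
    HasDerivAt (fun t : ℝ => A * (t : ℂ) + B) A x := by
  simpa using ((hasDerivAt_ofReal' x).const_mul A).add_const B

private lemma hasDerivAt_lin₂ (A B : ℂ) (x : ℝ) :
    HasDerivAt (fun t : ℝ => A + B * (t : ℂ)) B x := by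
  simpa using ((hasDerivAt_ofReal' x).const_mul B).const_add A

theorem stmt_9 (d μ K L M : ℂ) (hd : d.im ≠ 0) (hμ : μ ≠ 0)
    (hdμ : d * μ = 2 + μ⁻¹)
    (hK : K = -1 + d * (starRingEnd ℂ) d * μ / ((starRingEnd ℂ) d - d))
    (hL : L = -(d * μ) / ((starRingEnd ℂ) d - d))
    (hM : M = μ / ((starRingEnd ℂ) d - d))
    (Q : ℝ → ℝ → ℂ)
    (hQ : ∀ x y : ℝ, Q x y =
      (K * (x : ℂ) ^ 2 + 2 * L * (x : ℂ) * (y : ℂ) + M * (y : ℂ) ^ 2) / 2)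
    (Ft : ℝ → ℝ → ℂ) (hFt : ContDiff ℝ 2 (fun p : ℝ × ℝ => Ft p.1 p.2))
    (heq : ∀ x y : ℝ,
      Dop d (Dop ((starRingEnd ℂ) d) Ft) x y
        + ((x : ℂ) / μ) * Dop ((starRingEnd ℂ) d) Ft x y
        + μ * (y : ℂ) * Dop d Ft x y = 0)
    (F : ℝ → ℝ → ℂ) (hF : ∀ x y : ℝ, F x y = Ft x y * Complex.exp (Q x y)) :
    ∀ x y : ℝ,
      Dop d (Dop ((starRingEnd ℂ) d) F) x y
        + 2 * I * (d.im : ℂ) * (x : ℂ) * pdy F x y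
        - (1 + μ⁻¹ + (x : ℂ) * ((x : ℂ) + (y : ℂ))) * F x y = 0 := by
  set c : ℂ := (starRingEnd ℂ) d with hcdef
  -- algebraic facts
  have hcd : c - d ≠ 0 := by
    rw [hcdef]
    intro h
    exact hd (Complex.conj_eq_iff_im.mp (sub_eq_zero.mp h))
  have hν : μ * μ⁻¹ = 1 := mul_inv_cancel₀ hμ
  have e1 : K + d * L = d * μ - 1 := by
    rw [hK, hL]; field_simp; ring
  have e2 : L + d * M = 0 := by
    rw [hL, hM]; field_simp; ring
  have e3 : K + c * L = -1 := by
    rw [hK, hL]; field_simp; ring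
  have e4 : L + c * M = μ := by
    rw [hL, hM]; field_simp; ring
  have e5 : d - c = 2 * I * (d.im : ℂ) := by
    rw [hcdef, Complex.sub_conj]; push_cast; ring
  -- derivatives of Q
  have hQx : ∀ a b : ℝ, HasDerivAt (fun t : ℝ => Q t b) (K * (a : ℂ) + L * (b : ℂ)) a := by
    intro a b
    have hsq : HasDerivAt (fun t : ℝ => (t : ℂ) ^ 2) (2 * (a : ℂ)) a := by
      have h := (hasDerivAt_ofReal' a).mul (hasDerivAt_ofReal' a)
      have hfn : (fun t : ℝ => (t : ℂ) ^ 2) = fun t : ℝ => (t : ℂ) * (t : ℂ) := by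
        funext t; ring
      rw [hfn]
      exact h.congr_deriv (by ring)
    have h1 : HasDerivAt (fun t : ℝ => K * (t : ℂ) ^ 2) (K * (2 * (a : ℂ))) a :=
      hsq.const_mul K
    have h2 : HasDerivAt (fun t : ℝ => 2 * L * (t : ℂ) * (b : ℂ)) (2 * L * 1 * (b : ℂ)) a :=
      ((hasDerivAt_ofReal' a).const_mul (2 * L)).mul_const (b : ℂ)
    have h3 := ((h1.add h2).add_const (M * (b : ℂ) ^ 2)).div_const 2
    simp only [hQ]
    exact h3.congr_deriv (by ring)
  have hQy : ∀ a b : ℝ, HasDerivAt (fun t : ℝ => Q a t) (L * (a : ℂ) + M * (b : ℂ)) b := by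
    intro a b
    have hsq : HasDerivAt (fun t : ℝ => (t : ℂ) ^ 2) (2 * (b : ℂ)) b := by
      have h := (hasDerivAt_ofReal' b).mul (hasDerivAt_ofReal' b)
      have hfn : (fun t : ℝ => (t : ℂ) ^ 2) = fun t : ℝ => (t : ℂ) * (t : ℂ) := by
        funext t; ring
      rw [hfn]
      exact h.congr_deriv (by ring)
    have h1 : HasDerivAt (fun t : ℝ => 2 * L * (a : ℂ) * (t : ℂ)) (2 * L * (a : ℂ) * 1) b :=
      (hasDerivAt_ofReal' b).const_mul (2 * L * (a : ℂ))
    have h2 : HasDerivAt (fun t : ℝ => M * (t : ℂ) ^ 2) (M * (2 * (b : ℂ))) b :=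
      hsq.const_mul M
    have h3 := (((hasDerivAt_const b (K * (a : ℂ) ^ 2)).add h1).add h2).div_const 2
    simp only [hQ]
    exact h3.congr_deriv (by ring)
  -- first partial derivatives of Ft
  set f : ℝ × ℝ → ℂ := fun p => Ft p.1 p.2 with hfdef
  have hfd : Differentiable ℝ f := hFt.differentiable (by norm_num)
  set gxf : ℝ × ℝ → ℂ := fun p => fderiv ℝ f p (1, 0) with hgxdef
  set gyf : ℝ × ℝ → ℂ := fun p => fderiv ℝ f p (0, 1) with hgydef
  have hgx : ContDiff ℝ 1 gxf :=
    (hFt.fderiv_right (by norm_num)).clm_apply contDiff_const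
  have hgy : ContDiff ℝ 1 gyf :=
    (hFt.fderiv_right (by norm_num)).clm_apply contDiff_const
  have hpdxFt : ∀ a b : ℝ, pdx Ft a b = gxf (a, b) := fun a b =>
    (sliceX (hfd (a, b))).deriv
  have hpdyFt : ∀ a b : ℝ, pdy Ft a b = gyf (a, b) := fun a b =>
    (sliceY (hfd (a, b))).deriv
  intro x y
  set A : ℂ := gxf (x, y) with hAdef
  set B : ℂ := gyf (x, y) with hBdef
  set gxx : ℂ := fderiv ℝ gxf (x, y) (1, 0) with hgxxdef
  set gxy : ℂ := fderiv ℝ gxf (x, y) (0, 1) with hgxydef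
  set gyx : ℂ := fderiv ℝ gyf (x, y) (1, 0) with hgyxdef
  set gyy : ℂ := fderiv ℝ gyf (x, y) (0, 1) with hgyydef
  have hgxd : DifferentiableAt ℝ gxf (x, y) := (hgx.differentiable one_ne_zero) (x, y)
  have hgyd : DifferentiableAt ℝ gyf (x, y) := (hgy.differentiable one_ne_zero) (x, y)
  -- rewrite the equation satisfied by Ft
  have hDcfun : (fun t => Dop c Ft t y) = fun t => gxf (t, y) + c * gyf (t, y) :=
    funext fun t => by simp only [Dop]; rw [hpdxFt, hpdyFt]
  have hDcfun' : (fun t => Dop c Ft x t) = fun t => gxf (x, t) + c * gyf (x, t) :=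
    funext fun t => by simp only [Dop]; rw [hpdxFt, hpdyFt]
  have hpdxDc : pdx (Dop c Ft) x y = gxx + c * gyx := by
    simp only [pdx]
    rw [hDcfun]
    exact ((sliceX hgxd).add ((sliceX hgyd).const_mul c)).deriv
  have hpdyDc : pdy (Dop c Ft) x y = gxy + c * gyy := by
    simp only [pdy]
    rw [hDcfun']
    exact ((sliceY hgxd).add ((sliceY hgyd).const_mul c)).deriv
  have heq' : gxx + c * gyx + d * (gxy + c * gyy)
      + ((x : ℂ) / μ) * (A + c * B) + μ * (y : ℂ) * (A + d * B) = 0 := by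
    have h := heq x y
    simp only [Dop] at h ⊢
    rw [hpdxDc, hpdyDc, hpdxFt, hpdyFt] at h
    linear_combination h
  -- first derivatives of F
  have hpdxF : ∀ a b : ℝ, pdx F a b =
      gxf (a, b) * Complex.exp (Q a b)
        + Ft a b * (Complex.exp (Q a b) * (K * (a : ℂ) + L * (b : ℂ))) := by
    intro a b
    have hfn : (fun t => F t b) = fun t => Ft t b * Complex.exp (Q t b) :=
      funext fun t => hF t b
    simp only [pdx]
    rw [hfn]
    exact ((sliceX (hfd (a, b))).mul ((hQx a b).cexp)).deriv
  have hpdyF : ∀ a b : ℝ, pdy F a b =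
      gyf (a, b) * Complex.exp (Q a b)
        + Ft a b * (Complex.exp (Q a b) * (L * (a : ℂ) + M * (b : ℂ))) := by
    intro a b
    have hfn : (fun t => F a t) = fun t => Ft a t * Complex.exp (Q a t) :=
      funext fun t => hF a t
    simp only [pdy]
    rw [hfn]
    exact ((sliceY (hfd (a, b))).mul ((hQy a b).cexp)).deriv
  -- the function H = Dop c F
  set H : ℝ → ℝ → ℂ := fun a b =>
    (gxf (a, b) + c * gyf (a, b)
      + Ft a b * ((K + c * L) * (a : ℂ) + (L + c * M) * (b : ℂ))) * Complex.exp (Q a b)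
    with hHdef
  have hDcF : Dop c F = H := by
    funext a b
    simp only [Dop]
    rw [hpdxF a b, hpdyF a b, hHdef]
    ring
  have hpdxH : pdx H x y =
      ((gxx + c * gyx)
          + (A * ((K + c * L) * (x : ℂ) + (L + c * M) * (y : ℂ)) + Ft x y * (K + c * L)))
        * Complex.exp (Q x y)
      + (A + c * B + Ft x y * ((K + c * L) * (x : ℂ) + (L + c * M) * (y : ℂ)))
        * (Complex.exp (Q x y) * (K * (x : ℂ) + L * (y : ℂ))) := by
    simp only [pdx]
    exact ((((sliceX hgxd).add ((sliceX hgyd).const_mul c)).add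
      ((sliceX (hfd (x, y))).mul
        (hasDerivAt_lin₁ (K + c * L) ((L + c * M) * (y : ℂ)) x))).mul
      ((hQx x y).cexp)).deriv
  have hpdyH : pdy H x y =
      ((gxy + c * gyy)
          + (B * ((K + c * L) * (x : ℂ) + (L + c * M) * (y : ℂ)) + Ft x y * (L + c * M)))
        * Complex.exp (Q x y)
      + (A + c * B + Ft x y * ((K + c * L) * (x : ℂ) + (L + c * M) * (y : ℂ)))
        * (Complex.exp (Q x y) * (L * (x : ℂ) + M * (y : ℂ))) := by
    simp only [pdy]
    exact ((((sliceY hgxd).add ((sliceY hgyd).const_mul c)).add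
      ((sliceY (hfd (x, y))).mul
        (hasDerivAt_lin₂ ((K + c * L) * (x : ℂ)) (L + c * M) y))).mul
      ((hQy x y).cexp)).deriv
  -- assemble
  rw [hDcF]
  simp only [Dop]
  rw [hpdxH, hpdyH, hpdyF x y, hF x y]
  linear_combination (Complex.exp (Q x y)) * heq'
    + Complex.exp (Q x y) * (A * (x : ℂ) + c * B * (x : ℂ)
        + Ft x y * (((K + c * L) * (x : ℂ) + (L + c * M) * (y : ℂ)) * (x : ℂ) + (x : ℂ) ^ 2)) * e1
    + Complex.exp (Q x y) * (A * (y : ℂ) + c * B * (y : ℂ)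
        + Ft x y * (((K + c * L) * (x : ℂ) + (L + c * M) * (y : ℂ)) * (y : ℂ) + (x : ℂ) * (y : ℂ))) * e2
    + Complex.exp (Q x y) * (A * (x : ℂ) + d * B * (x : ℂ)
        + Ft x y * (1 + (d * μ - 1) * (x : ℂ) ^ 2 - (x : ℂ) ^ 2)) * e3
    + Complex.exp (Q x y) * (A * (y : ℂ) + d * B * (y : ℂ)
        + Ft x y * (d + (d * μ - 1) * (x : ℂ) * (y : ℂ) - (x : ℂ) * (y : ℂ))) * e4
    + Complex.exp (Q x y) * (-(B * (x : ℂ)) - Ft x y * (x : ℂ) * (L * (x : ℂ) + M * (y : ℂ))) * e5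
    + Complex.exp (Q x y) * (A * (x : ℂ) + c * B * (x : ℂ)
        + Ft x y * (1 + μ * (x : ℂ) * (y : ℂ))) * hdμ
    + Complex.exp (Q x y) * (Ft x y * (x : ℂ) * (y : ℂ)) * hν
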